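/- Let X and Y be compact metric spaces, ν a finite Borel measure on X, f : X → Y a Borel measurable function, μ̂ = f∗ν the pushforward of ν to Y, and μ = (Id, f)∗ν the pushforward of ν onto the graph of f in X × Y. Let (μ_y)_{y∈Y} be a disintegration of μ over the fibers X × {y} with respect to μ̂. Then for μ̂-almost every y ∈ Y: y is not an atom of μ̂ if and only if μ_y and ν are mutually singular (as measures on X, identifying X × {y} with X). -/

import Mathlib

open MeasureTheory
open scoped ENNReal

/-- If `g ≤ 1` a.e. and its (lower) Lebesgue integral equals the total mass of a finite
measure, then `g = 1` a.e. -/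
lemma aux_ae_eq_one {Y : Type*} [MeasurableSpace Y] (μ : Measure Y) [IsFiniteMeasure μ]
    (g : Y → ℝ≥0∞) (hg1 : ∀ᵐ y ∂μ, g y ≤ 1)
    (hint : ∫⁻ y, g y ∂μ = μ Set.univ) : ∀ᵐ y ∂μ, g y = 1 := by
  obtain ⟨φ, hφm, hφle, hφint⟩ := exists_measurable_le_lintegral_eq μ g
  have hφ1 : ∀ᵐ y ∂μ, φ y ≤ 1 := hg1.mono fun y h => le_trans (hφle y) h
  have hφint' : ∫⁻ y, φ y ∂μ = μ Set.univ := by rw [← hφint, hint]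
  have hsub : ∫⁻ y, ((1 : ℝ≥0∞) - φ y) ∂μ = 0 := by
    rw [lintegral_sub hφm (by simp [hφint', measure_ne_top]) hφ1]
    simp [hφint']
  have h0 := (lintegral_eq_zero_iff (measurable_const.sub hφm)).1 hsub
  filter_upwards [h0, hg1] with y h1 h2
  have h3 : (1 : ℝ≥0∞) ≤ φ y := tsub_eq_zero_iff_le.mp h1
  exact le_antisymm h2 (h3.trans (hφle y))

/-- Disintegration of the graph measure: for a.e. `y`, `y` is not an atom of the
pushforward `μ̂ = f∗ν` iff the conditional measure `μ_y` is mutually singular with `ν`. -/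
theorem stmt0
    {X Y : Type*} [MetricSpace X] [CompactSpace X] [MeasurableSpace X] [BorelSpace X]
    [MetricSpace Y] [CompactSpace Y] [MeasurableSpace Y] [BorelSpace Y]
    (ν : Measure X) [IsFiniteMeasure ν]
    (f : X → Y) (hf : Measurable f)
    (μhat : Measure Y) (hμhat : μhat = ν.map f)
    (μ : Measure (X × Y)) (hμ : μ = ν.map (fun x => (x, f x)))
    (μy : Y → Measure X)
    (hprob : ∀ᵐ y ∂μhat, IsProbabilityMeasure (μy y))
    (hdis : ∀ s : Set (X × Y), MeasurableSet s →
      μ s = ∫⁻ y, μy y {x | (x, y) ∈ s} ∂μhat) :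
    ∀ᵐ y ∂μhat, (μhat {y} = 0 ↔ μy y ⟂ₘ ν) := by
  have hfin : IsFiniteMeasure μhat := by rw [hμhat]; infer_instance
  have hg : Measurable (fun x => (x, f x)) := measurable_id.prodMk hf
  -- the graph set
  have hgraph : MeasurableSet {p : X × Y | f p.1 = p.2} :=
    ((hf.comp measurable_fst).prodMk measurable_snd) isClosed_diagonal.measurableSet
  -- a.e. y, μy y is concentrated on the fiber f⁻¹ {y}
  have hconc : ∀ᵐ y ∂μhat, μy y {x | f x = y} = 1 := by
    apply aux_ae_eq_one
    · filter_upwards [hprob] with y hy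
      calc μy y {x | f x = y} ≤ μy y Set.univ := measure_mono (Set.subset_univ _)
        _ = 1 := hy.measure_univ
    · have h1 : μ {p : X × Y | f p.1 = p.2} = ∫⁻ y, μy y {x | f x = y} ∂μhat :=
        hdis _ hgraph
      have h2 : μ {p : X × Y | f p.1 = p.2} = μhat Set.univ := by
        rw [hμ, Measure.map_apply hg hgraph, hμhat, Measure.map_apply hf MeasurableSet.univ]
        simp
      rw [← h1, h2]
  filter_upwards [hprob, hconc] with y hy hcy
  constructor
  · -- non-atom → singular
    intro h0
    refine ⟨{x | f x = y}ᶜ, (hf (measurableSet_singleton y)).compl, ?_, ?_⟩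
    · have hms : MeasurableSet {x | f x = y} := hf (measurableSet_singleton y)
      have hcompl : μy y {x | f x = y}ᶜ = μy y Set.univ - μy y {x | f x = y} :=
        measure_compl hms (by rw [hcy]; exact ENNReal.one_ne_top)
      rw [hcompl, hy.measure_univ, hcy, tsub_self]
    · rw [compl_compl]
      have : ν {x | f x = y} = μhat {y} := by
        rw [hμhat, Measure.map_apply hf (measurableSet_singleton y)]; rfl
      rw [this, h0]
  · -- atom → not singular
    intro hsing
    by_contra h0
    obtain ⟨t, ht, h1t, h2t⟩ := hsing
    -- apply disintegration to tᶜ ×ˢ {y}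
    have hs : MeasurableSet (tᶜ ×ˢ ({y} : Set Y)) := ht.compl.prod (measurableSet_singleton y)
    have hμs : μ (tᶜ ×ˢ ({y} : Set Y)) = 0 := by
      rw [hμ, Measure.map_apply hg hs]
      refine le_antisymm (le_trans (measure_mono ?_) (le_of_eq h2t)) (zero_le)
      intro x hx
      exact hx.1
    have hint : ∫⁻ y', μy y' {x | (x, y') ∈ tᶜ ×ˢ ({y} : Set Y)} ∂μhat
        = μy y tᶜ * μhat {y} := by
      have hcong : (fun y' => μy y' {x | (x, y') ∈ tᶜ ×ˢ ({y} : Set Y)})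
          = Set.indicator {y} (fun y' => μy y' tᶜ) := by
        funext y'
        by_cases hyy : y' = y
        · subst hyy
          have h1 : {x | (x, y') ∈ tᶜ ×ˢ ({y'} : Set Y)} = tᶜ := by
            ext x; simp [Set.mem_prod]
          rw [h1, Set.indicator_of_mem (Set.mem_singleton y')]
        · have h1 : {x | (x, y') ∈ tᶜ ×ˢ ({y} : Set Y)} = (∅ : Set X) := by
            ext x
            simp only [Set.mem_setOf_eq, Set.mem_prod, Set.mem_singleton_iff,
              Set.mem_empty_iff_false, iff_false, not_and]
            intro _ h
            exact hyy h
          rw [h1, Set.indicator_of_notMem (by simpa using hyy)]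
          simp
      rw [hcong, lintegral_indicator (measurableSet_singleton y) _, lintegral_singleton]
    have := hdis _ hs
    rw [hμs, hint] at this
    have hzero : μy y tᶜ = 0 := by
      rcases mul_eq_zero.mp this.symm with h | h
      · exact h
      · exact absurd h h0
    have : (1 : ℝ≥0∞) ≤ 0 := by
      calc (1 : ℝ≥0∞) = μy y Set.univ := hy.measure_univ.symm
        _ ≤ μy y t + μy y tᶜ := measure_univ_le_add_compl t
        _ = 0 := by rw [h1t, hzero, add_zero]
    exact absurd this (by simp)
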